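/- Let f : X → ℝ ∪ {±∞} be proper and int-nearly convex. Then f agrees with its lower semicontinuous hull cl f on the interior of dom f: cl f(x) = f(x) for all x ∈ int(dom f). -/

import Mathlib

theorem stmt13 {X : Type*} [AddCommGroup X] [Module ℝ X] [TopologicalSpace X]
    [IsTopologicalAddGroup X] [ContinuousSMul ℝ X] (f : X → EReal)
    (hdom : ∃ x, f x ≠ ⊤) (hbot : ∀ x, f x ≠ ⊥)
    (hnc : ∃ C : Set (X × ℝ), Convex ℝ C ∧ (interior C).Nonempty ∧
      C ⊆ {p : X × ℝ | f p.1 ≤ (p.2 : EReal)} ∧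
      {p : X × ℝ | f p.1 ≤ (p.2 : EReal)} ⊆ closure C) :
    ∀ x ∈ interior {x : X | f x < ⊤}, Filter.liminf f (nhds x) = f x := by
  obtain ⟨C, hC, ⟨⟨y₀, t₀⟩, hp₀⟩, hCepi, hepiC⟩ := hnc
  intro x hx
  refine le_antisymm ?_ ?_
  · -- liminf ≤ f x
    refine Filter.liminf_le_of_frequently_le' ?_
    refine Filter.Frequently.filter_mono ?_ (pure_le_nhds x)
    exact (Filter.eventually_pure.2 le_rfl).frequently
  · -- f x ≤ liminf
    by_contra h
    push_neg at h
    obtain ⟨r, hr1, hr2⟩ := EReal.exists_between_coe_real h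
    -- (x, r) ∈ closure C
    have hxr : (x, r) ∈ closure C := by
      have h1 : (x, r) ∈ closure {p : X × ℝ | f p.1 ≤ (p.2 : EReal)} := by
        rw [mem_closure_iff_nhds]
        intro U hU
        rw [nhds_prod_eq, Filter.mem_prod_iff] at hU
        obtain ⟨V, hV, W, hW, hVW⟩ := hU
        have hex : ¬ ∀ y ∈ V, (r : EReal) ≤ f y := by
          intro hall
          have : (r : EReal) ≤ Filter.liminf f (nhds x) :=
            Filter.le_liminf_of_le (by isBoundedDefault)
              (Filter.eventually_iff_exists_mem.2 ⟨V, hV, hall⟩)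
          exact absurd hr1 (not_lt.2 this)
        push_neg at hex
        obtain ⟨y, hyV, hyr⟩ := hex
        exact ⟨(y, r), hVW ⟨hyV, mem_of_mem_nhds hW⟩, le_of_lt hyr⟩
      have h2 := closure_mono hepiC h1
      rwa [closure_closure] at h2
    -- find z = x + t • (x - y₀) in dom f with t > 0
    have hcont : ContinuousAt (fun t : ℝ => x + t • (x - y₀)) 0 := by fun_prop
    have hmem : interior {x : X | f x < ⊤} ∈
        nhds ((fun t : ℝ => x + t • (x - y₀)) 0) := by
      simpa using isOpen_interior.mem_nhds hx
    have hev : ∀ᶠ t in nhds (0 : ℝ), x + t • (x - y₀) ∈ {x : X | f x < ⊤} :=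
      (hcont.eventually_mem hmem).mono fun t ht => interior_subset ht
    obtain ⟨t, htmem, ht0⟩ :=
      ((hev.filter_mono nhdsWithin_le_nhds).and self_mem_nhdsWithin).exists
        (f := nhdsWithin (0 : ℝ) (Set.Ioi 0))
    set z := x + t • (x - y₀) with hz
    have ht0' : (0 : ℝ) < t := ht0
    set sz := (f z).toReal with hsz
    have hfz : f z = (sz : EReal) := (EReal.coe_toReal (ne_of_lt htmem) (hbot z)).symm
    have hzcl : ((z, sz) : X × ℝ) ∈ closure C := hepiC (by simp [hfz])
    -- x = a • z + b • y₀ with a = 1/(1+t), b = t/(1+t)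
    have h1t : (0 : ℝ) < 1 + t := by linarith
    set a := (1 + t)⁻¹ with ha
    set b := t / (1 + t) with hb
    have ha0 : 0 < a := by positivity
    have hb0 : 0 < b := by positivity
    have hab : b + a = 1 := by rw [ha, hb]; field_simp; ring
    have hxcomb : b • (y₀, t₀) + a • ((z, sz) : X × ℝ) = (x, b * t₀ + a * sz) := by
      have h1 : b • y₀ + a • z = x := by
        rw [hz]
        match_scalars
        · rw [hb, ha]; ring
        · rw [ha]; rw [mul_one]; exact inv_mul_cancel₀ h1t.ne'
      simp only [Prod.smul_mk, Prod.mk_add_mk, Prod.mk.injEq]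
      exact ⟨h1, by simp [smul_eq_mul]⟩
    set s := b * t₀ + a * sz with hs
    have hxs : ((x, s) : X × ℝ) ∈ interior C := by
      refine hC.openSegment_interior_closure_subset_interior hp₀ hzcl ?_
      exact ⟨b, a, hb0, ha0, hab, hxcomb⟩
    -- now f x ≤ r
    have key : ∀ c : ℝ, (r : EReal) < c → f x ≤ c := by
      intro c hc
      have hc' : r < c := by exact_mod_cast hc
      set θ := min (1/2 : ℝ) ((c - r) / (|s - r| + 1)) with hθ
      have hθ0 : 0 < θ := by
        exact lt_min (by norm_num) (div_pos (by linarith) (by positivity))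
      have hθ1 : θ < 1 := lt_of_le_of_lt (min_le_left _ _) (by norm_num)
      have hmemseg : ((x, θ * s + (1 - θ) * r) : X × ℝ) ∈ openSegment ℝ (x, s) (x, r) := by
        refine ⟨θ, 1 - θ, hθ0, by linarith, by ring, ?_⟩
        simp only [Prod.smul_mk, Prod.mk_add_mk, Prod.mk.injEq]
        constructor
        · module
        · simp [smul_eq_mul]
      have hmemC : ((x, θ * s + (1 - θ) * r) : X × ℝ) ∈ C :=
        interior_subset (hC.openSegment_interior_closure_subset_interior hxs hxr hmemseg)
      have hfle : f x ≤ ((θ * s + (1 - θ) * r : ℝ) : EReal) := hCepi hmemC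
      have hlt : θ * s + (1 - θ) * r < c := by
        have h3 : θ * s + (1 - θ) * r = r + θ * (s - r) := by ring
        have h4 : θ * (s - r) ≤ θ * |s - r| := by
          apply mul_le_mul_of_nonneg_left (le_abs_self _) hθ0.le
        have h5 : θ ≤ (c - r) / (|s - r| + 1) := min_le_right _ _
        have h6 : 0 ≤ |s - r| := abs_nonneg _
        have h7 : θ * |s - r| < c - r := by
          have := mul_le_mul_of_nonneg_right h5 h6
          have h8 : (c - r) / (|s - r| + 1) * |s - r| < c - r := by
            rw [div_mul_eq_mul_div, div_lt_iff₀ (by linarith)]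
            nlinarith
          linarith
        linarith
      exact hfle.trans (by exact_mod_cast hlt.le)
    have : f x ≤ (r : EReal) := EReal.le_of_forall_lt_iff_le.mp key
    exact absurd hr2 (not_lt.2 this)
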